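/- Let N ≥ 2 and let R be the N×N real matrix with R_{i,i} = -1/√2 and R_{i,i+1} = 1/√2 for 1 ≤ i ≤ N-1, R_{N,j} = 1/N for all j, and all other entries 0. Then R is invertible and its inverse is given by (R⁻¹)_{i,j} = -√2(N-j)/N if i ≤ j and j ≤ N-1; (R⁻¹)_{i,j} = √2 j/N if i > j and j ≤ N-1; and (R⁻¹)_{i,N} = 1 for all 1 ≤ i ≤ N. -/

import Mathlib

/-- The matrix `R` (rows `1 ≤ i ≤ N-1`: `-1/√2` at column `i`, `1/√2` at column `i+1`;
row `N`: all entries `1/N`) is invertible with the explicit inverse `Rinv`. -/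
theorem stmt1 (N : ℕ) (hN : 2 ≤ N)
    (R Rinv : Matrix (Fin N) (Fin N) ℝ)
    (hR : ∀ i j : Fin N, R i j =
      if (i : ℕ) = N - 1 then 1 / (N : ℝ)
      else if j = i then -(1 / Real.sqrt 2)
      else if (j : ℕ) = (i : ℕ) + 1 then 1 / Real.sqrt 2 else 0)
    (hRinv : ∀ i j : Fin N, Rinv i j =
      if (j : ℕ) = N - 1 then 1
      else if (i : ℕ) ≤ (j : ℕ) then
        -(Real.sqrt 2 * ((N : ℝ) - (((j : ℕ) : ℝ) + 1)) / (N : ℝ))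
      else Real.sqrt 2 * (((j : ℕ) : ℝ) + 1) / (N : ℝ)) :
    IsUnit R ∧ R⁻¹ = Rinv := by
  have hNR : (0:ℝ) < (N:ℝ) := by positivity
  have hNne : (N:ℝ) ≠ 0 := ne_of_gt hNR
  have hs2pos : (0:ℝ) < Real.sqrt 2 := Real.sqrt_pos.mpr (by norm_num)
  have hs2ne : Real.sqrt 2 ≠ 0 := ne_of_gt hs2pos
  have hs2sq : Real.sqrt 2 * Real.sqrt 2 = 2 := Real.mul_self_sqrt (by norm_num)
  have key : R * Rinv = 1 := by
    ext i j
    rw [Matrix.mul_apply, Matrix.one_apply]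
    by_cases hi : (i:ℕ) = N - 1
    · -- last row of R
      have hterm : ∀ k : Fin N, R i k * Rinv k j = (1/(N:ℝ)) * Rinv k j := by
        intro k; rw [hR]; simp [hi]
      rw [Finset.sum_congr rfl (fun k _ => hterm k), ← Finset.mul_sum]
      by_cases hj : (j:ℕ) = N - 1
      · have hij : i = j := Fin.ext (by omega)
        have h1 : ∀ k : Fin N, Rinv k j = 1 := by
          intro k; rw [hRinv]; simp [hj]
        rw [Finset.sum_congr rfl (fun k _ => h1 k)]
        simp [hij]
        field_simp
      · have hij : i ≠ j := fun h => hj (h ▸ hi)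
        have hjN : (j:ℕ) + 1 ≤ N := j.2
        set a : ℝ := -(Real.sqrt 2 * ((N : ℝ) - (((j : ℕ) : ℝ) + 1)) / (N : ℝ)) with ha
        set b : ℝ := Real.sqrt 2 * (((j : ℕ) : ℝ) + 1) / (N : ℝ) with hb
        have h1 : ∀ k : Fin N, Rinv k j = if (k:ℕ) ≤ (j:ℕ) then a else b := by
          intro k; rw [hRinv]; simp [hj, ha, hb]
        rw [Finset.sum_congr rfl (fun k _ => h1 k)]
        rw [show (∑ k : Fin N, (if (k:ℕ) ≤ (j:ℕ) then a else b))
            = ∑ k ∈ Finset.range N, (if k ≤ (j:ℕ) then a else b) from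
          Fin.sum_univ_eq_sum_range (fun k => if k ≤ (j:ℕ) then a else b) N]
        rw [Finset.range_eq_Ico, ← Finset.sum_Ico_consecutive _ (Nat.zero_le ((j:ℕ)+1)) hjN]
        have h3 : ∑ k ∈ Finset.Ico 0 ((j:ℕ)+1), (if k ≤ (j:ℕ) then a else b)
            = ((j:ℕ)+1 : ℕ) • a := by
          rw [Finset.sum_congr rfl (fun k hk => by
            rw [if_pos]; exact Nat.lt_succ_iff.mp (Finset.mem_Ico.mp hk).2)]
          simp
        have h4 : ∑ k ∈ Finset.Ico ((j:ℕ)+1) N, (if k ≤ (j:ℕ) then a else b)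
            = (N - ((j:ℕ)+1) : ℕ) • b := by
          rw [Finset.sum_congr rfl (fun k hk => by
            rw [if_neg]; exact Nat.not_le.mpr (Finset.mem_Ico.mp hk).1)]
          simp
        rw [h3, h4, if_neg hij]
        rw [nsmul_eq_mul, nsmul_eq_mul, Nat.cast_sub hjN]
        push_cast
        rw [ha, hb]
        ring
    · -- rows with two nonzero entries
      have hi1 : (i:ℕ) + 1 < N := by omega
      set i' : Fin N := ⟨(i:ℕ)+1, hi1⟩ with hi'
      have hne : i ≠ i' := by
        intro h; apply absurd (congrArg Fin.val h); simp [hi']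
      have hzero : ∀ c : Fin N, c ≠ i → c ≠ i' → R i c * Rinv c j = 0 := by
        intro c hc1 hc2
        have hc2' : (c:ℕ) ≠ (i:ℕ) + 1 := by
          intro h; exact hc2 (Fin.ext (by simp [hi', h]))
        rw [hR]; simp [hi, hc1, hc2']
      rw [Fintype.sum_eq_add i i' hne (fun c hc => hzero c hc.1 hc.2)]
      have hRii : R i i = -(1 / Real.sqrt 2) := by rw [hR]; simp [hi]
      have hRii' : R i i' = 1 / Real.sqrt 2 := by
        rw [hR]; simp [hi, hi', hne.symm, Fin.ext_iff]
      rw [hRii, hRii']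
      by_cases hj : (j:ℕ) = N - 1
      · have hij : i ≠ j := fun h => hi (by rw [h]; exact hj)
        rw [hRinv, hRinv, if_pos hj, if_pos hj, if_neg hij]
        ring
      · rw [hRinv, hRinv, if_neg hj, if_neg hj]
        simp only [hi']
        rcases lt_trichotomy ((i:ℕ)) ((j:ℕ)) with h | h | h
        · have hij : i ≠ j := fun he => absurd (congrArg Fin.val he) (by omega)
          rw [if_pos (le_of_lt h), if_pos (by omega : (i:ℕ)+1 ≤ (j:ℕ)), if_neg hij]
          ring
        · have hij : i = j := Fin.ext h
          rw [if_pos (le_of_eq h), if_neg (by omega : ¬ (i:ℕ)+1 ≤ (j:ℕ)), if_pos hij]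
          field_simp
          ring
        · have hij : i ≠ j := fun he => absurd (congrArg Fin.val he) (by omega)
          rw [if_neg (by omega), if_neg (by omega), if_neg hij]
          ring
  exact ⟨(Matrix.isUnit_iff_isUnit_det R).mpr (Matrix.isUnit_det_of_right_inverse key), Matrix.inv_eq_right_inv key⟩
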